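/- Let 0 < ε ≤ μ ≤ 1, let α > 0, let A = (a_{ij})_{i,j=1,2} : [0,1] → ℝ^{2×2} be continuous with ξᵀA(x)ξ ≥ α²‖ξ‖² for all ξ ∈ ℝ² and all x ∈ [0,1], and let f, g : [0,1] → ℝ be continuous. If u, v : [0,1] → ℝ are twice continuously differentiable, satisfy −ε²u''(x) + a₁₁(x)u(x) + a₁₂(x)v(x) = f(x) and −μ²v''(x) + a₂₁(x)u(x) + a₂₂(x)v(x) = g(x) for all x ∈ (0,1), and u(0)=u(1)=v(0)=v(1)=0, then ε²∫₀¹ u'(x)² dx + μ²∫₀¹ v'(x)² dx + α²(∫₀¹ u(x)² dx + ∫₀¹ v(x)² dx) ≤ α^{-2}(∫₀¹ f(x)² dx + ∫₀¹ g(x)² dx). -/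

import Mathlib

open Set MeasureTheory intervalIntegral

lemma young_aux (α f u : ℝ) (hα : 0 < α) :
    f * u ≤ (2 * α ^ 2)⁻¹ * f ^ 2 + α ^ 2 / 2 * u ^ 2 := by
  have hα2 : (0:ℝ) < 2 * α ^ 2 := by positivity
  have h2 : 2 * α ^ 2 * (f * u) ≤ f ^ 2 + α ^ 4 * u ^ 2 := by
    nlinarith [sq_nonneg (f - α ^ 2 * u)]
  have := (div_le_div_iff_of_pos_right hα2).mpr h2
  calc f * u = 2 * α ^ 2 * (f * u) / (2 * α ^ 2) := by field_simp
    _ ≤ (f ^ 2 + α ^ 4 * u ^ 2) / (2 * α ^ 2) := this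
    _ = (2 * α ^ 2)⁻¹ * f ^ 2 + α ^ 2 / 2 * u ^ 2 := by field_simp

/-- A priori energy estimate for the coupled singularly perturbed
reaction-diffusion system `-ε²u'' + a₁₁u + a₁₂v = f`, `-μ²v'' + a₂₁u + a₂₂v = g`
on `(0,1)` with homogeneous Dirichlet boundary conditions. -/
theorem stmt_0
    (ε μ α : ℝ) (hε : 0 < ε) (hεμ : ε ≤ μ) (hμ : μ ≤ 1) (hα : 0 < α)
    (a₁₁ a₁₂ a₂₁ a₂₂ f g : ℝ → ℝ)
    (ha₁₁ : ContinuousOn a₁₁ (Icc 0 1)) (ha₁₂ : ContinuousOn a₁₂ (Icc 0 1))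
    (ha₂₁ : ContinuousOn a₂₁ (Icc 0 1)) (ha₂₂ : ContinuousOn a₂₂ (Icc 0 1))
    (hf : ContinuousOn f (Icc 0 1)) (hg : ContinuousOn g (Icc 0 1))
    (hA : ∀ x ∈ Icc (0:ℝ) 1, ∀ ξ₁ ξ₂ : ℝ,
      α ^ 2 * (ξ₁ ^ 2 + ξ₂ ^ 2) ≤
        ξ₁ * (a₁₁ x * ξ₁ + a₁₂ x * ξ₂) + ξ₂ * (a₂₁ x * ξ₁ + a₂₂ x * ξ₂))
    (u v u' v' u'' v'' : ℝ → ℝ)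
    (hu' : ∀ x ∈ Icc (0:ℝ) 1, HasDerivAt u (u' x) x)
    (hu'' : ∀ x ∈ Icc (0:ℝ) 1, HasDerivAt u' (u'' x) x)
    (hv' : ∀ x ∈ Icc (0:ℝ) 1, HasDerivAt v (v' x) x)
    (hv'' : ∀ x ∈ Icc (0:ℝ) 1, HasDerivAt v' (v'' x) x)
    (hu''c : ContinuousOn u'' (Icc 0 1)) (hv''c : ContinuousOn v'' (Icc 0 1))
    (heq₁ : ∀ x ∈ Ioo (0:ℝ) 1, -ε ^ 2 * u'' x + a₁₁ x * u x + a₁₂ x * v x = f x)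
    (heq₂ : ∀ x ∈ Ioo (0:ℝ) 1, -μ ^ 2 * v'' x + a₂₁ x * u x + a₂₂ x * v x = g x)
    (hu0 : u 0 = 0) (hu1 : u 1 = 0) (hv0 : v 0 = 0) (hv1 : v 1 = 0) :
    ε ^ 2 * (∫ x in (0:ℝ)..1, (u' x) ^ 2) + μ ^ 2 * (∫ x in (0:ℝ)..1, (v' x) ^ 2) +
      α ^ 2 * ((∫ x in (0:ℝ)..1, (u x) ^ 2) + (∫ x in (0:ℝ)..1, (v x) ^ 2)) ≤
      (α ^ 2)⁻¹ * ((∫ x in (0:ℝ)..1, (f x) ^ 2) + (∫ x in (0:ℝ)..1, (g x) ^ 2)) := by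
  have h01 : (0:ℝ) ≤ 1 := by norm_num
  have hIcc : uIcc (0:ℝ) 1 = Icc 0 1 := uIcc_of_le h01
  -- continuity facts
  have huc : ContinuousOn u (Icc 0 1) := fun x hx => (hu' x hx).continuousAt.continuousWithinAt
  have hvc : ContinuousOn v (Icc 0 1) := fun x hx => (hv' x hx).continuousAt.continuousWithinAt
  have hu'c : ContinuousOn u' (Icc 0 1) := fun x hx => (hu'' x hx).continuousAt.continuousWithinAt
  have hv'c : ContinuousOn v' (Icc 0 1) := fun x hx => (hv'' x hx).continuousAt.continuousWithinAt
  have intOf : ∀ {h : ℝ → ℝ}, ContinuousOn h (Icc 0 1) → IntervalIntegrable h volume 0 1 :=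
    fun hc => ContinuousOn.intervalIntegrable (by rwa [hIcc])
  -- integration by parts
  have ibpu : (∫ x in (0:ℝ)..1, u x * u'' x) = -(∫ x in (0:ℝ)..1, u' x * u' x) := by
    have h := intervalIntegral.integral_mul_deriv_eq_deriv_mul
      (fun x hx => hu' x (hIcc ▸ hx)) (fun x hx => hu'' x (hIcc ▸ hx))
      (intOf hu'c) (intOf hu''c)
    rw [h, hu0, hu1]; ring
  have ibpv : (∫ x in (0:ℝ)..1, v x * v'' x) = -(∫ x in (0:ℝ)..1, v' x * v' x) := by
    have h := intervalIntegral.integral_mul_deriv_eq_deriv_mul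
      (fun x hx => hv' x (hIcc ▸ hx)) (fun x hx => hv'' x (hIcc ▸ hx))
      (intOf hv'c) (intOf hv''c)
    rw [h, hv0, hv1]; ring
  -- quadratic forms
  set Q₁ : ℝ → ℝ := fun x => u x * (a₁₁ x * u x + a₁₂ x * v x) with hQ₁def
  set Q₂ : ℝ → ℝ := fun x => v x * (a₂₁ x * u x + a₂₂ x * v x) with hQ₂def
  have hQ₁c : ContinuousOn Q₁ (Icc 0 1) := huc.mul ((ha₁₁.mul huc).add (ha₁₂.mul hvc))
  have hQ₂c : ContinuousOn Q₂ (Icc 0 1) := hvc.mul ((ha₂₁.mul huc).add (ha₂₂.mul hvc))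
  -- a.e. congruence helper
  have hae : ∀ᵐ x : ℝ ∂volume, x ∈ uIoc (0:ℝ) 1 → x ∈ Ioo (0:ℝ) 1 := by
    have h1 : ∀ᵐ x : ℝ ∂volume, x ∉ ({1} : Set ℝ) :=
      measure_eq_zero_iff_ae_notMem.mp (measure_singleton 1)
    filter_upwards [h1] with x hx hmem
    rw [uIoc_of_le h01] at hmem
    exact ⟨hmem.1, lt_of_le_of_ne hmem.2 (by simpa using hx)⟩
  -- weak form of equation 1
  have key1 : ε ^ 2 * (∫ x in (0:ℝ)..1, u' x * u' x) + (∫ x in (0:ℝ)..1, Q₁ x)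
      = ∫ x in (0:ℝ)..1, f x * u x := by
    have congr1 : (∫ x in (0:ℝ)..1, f x * u x)
        = ∫ x in (0:ℝ)..1, ((-ε ^ 2) * (u x * u'' x) + Q₁ x) := by
      apply intervalIntegral.integral_congr_ae
      filter_upwards [hae] with x hx hmem
      have := heq₁ x (hx hmem)
      simp only [hQ₁def]
      rw [← this]; ring
    rw [congr1, intervalIntegral.integral_add
        (((intOf huc).mul_continuousOn (by rwa [hIcc])).const_mul _) (intOf hQ₁c),
      intervalIntegral.integral_const_mul, ibpu]
    ring
  have key2 : μ ^ 2 * (∫ x in (0:ℝ)..1, v' x * v' x) + (∫ x in (0:ℝ)..1, Q₂ x)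
      = ∫ x in (0:ℝ)..1, g x * v x := by
    have congr2 : (∫ x in (0:ℝ)..1, g x * v x)
        = ∫ x in (0:ℝ)..1, ((-μ ^ 2) * (v x * v'' x) + Q₂ x) := by
      apply intervalIntegral.integral_congr_ae
      filter_upwards [hae] with x hx hmem
      have := heq₂ x (hx hmem)
      simp only [hQ₂def]
      rw [← this]; ring
    rw [congr2, intervalIntegral.integral_add
        (((intOf hvc).mul_continuousOn (by rwa [hIcc])).const_mul _) (intOf hQ₂c),
      intervalIntegral.integral_const_mul, ibpv]
    ring
  -- coercivity: ∫ (Q₁ + Q₂) ≥ α² ∫ (u² + v²)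
  have coerc : α ^ 2 * ((∫ x in (0:ℝ)..1, (u x) ^ 2) + (∫ x in (0:ℝ)..1, (v x) ^ 2))
      ≤ (∫ x in (0:ℝ)..1, Q₁ x) + (∫ x in (0:ℝ)..1, Q₂ x) := by
    have h := intervalIntegral.integral_mono_on h01
      (((intOf (huc.pow 2)).add (intOf (hvc.pow 2))).const_mul (α ^ 2))
      ((intOf hQ₁c).add (intOf hQ₂c))
      (fun x hx => hA x hx (u x) (v x))
    rw [intervalIntegral.integral_const_mul, intervalIntegral.integral_add
        (intOf (huc.pow 2)) (intOf (hvc.pow 2)), intervalIntegral.integral_add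
        (intOf hQ₁c) (intOf hQ₂c)] at h
    exact h
  -- Young inequality for RHS
  have young : (∫ x in (0:ℝ)..1, f x * u x) + (∫ x in (0:ℝ)..1, g x * v x)
      ≤ (2 * α ^ 2)⁻¹ * ((∫ x in (0:ℝ)..1, (f x) ^ 2) + (∫ x in (0:ℝ)..1, (g x) ^ 2))
        + α ^ 2 / 2 * ((∫ x in (0:ℝ)..1, (u x) ^ 2) + (∫ x in (0:ℝ)..1, (v x) ^ 2)) := by
    have h := intervalIntegral.integral_mono_on h01
      ((intOf (hf.mul huc)).add (intOf (hg.mul hvc)))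
      ((((intOf (hf.pow 2)).add (intOf (hg.pow 2))).const_mul ((2*α^2)⁻¹)).add
        (((intOf (huc.pow 2)).add (intOf (hvc.pow 2))).const_mul (α^2/2)))
      (fun x _ => by
        have h1 := young_aux α (f x) (u x) hα
        have h2 := young_aux α (g x) (v x) hα
        simp only [Pi.add_apply, Pi.mul_apply, Pi.pow_apply]
        linarith)
    rw [intervalIntegral.integral_add (intOf (hf.mul huc)) (intOf (hg.mul hvc)),
      intervalIntegral.integral_add
        ((((intOf (hf.pow 2)).add (intOf (hg.pow 2))).const_mul ((2*α^2)⁻¹)))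
        ((((intOf (huc.pow 2)).add (intOf (hvc.pow 2))).const_mul (α^2/2))),
      intervalIntegral.integral_const_mul, intervalIntegral.integral_const_mul,
      intervalIntegral.integral_add (intOf (hf.pow 2)) (intOf (hg.pow 2)),
      intervalIntegral.integral_add (intOf (huc.pow 2)) (intOf (hvc.pow 2))] at h
    exact h
  -- nonnegativity
  have hu'nn : 0 ≤ ∫ x in (0:ℝ)..1, u' x * u' x :=
    intervalIntegral.integral_nonneg h01 (fun x _ => mul_self_nonneg _)
  have hv'nn : 0 ≤ ∫ x in (0:ℝ)..1, v' x * v' x :=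
    intervalIntegral.integral_nonneg h01 (fun x _ => mul_self_nonneg _)
  have hunn : 0 ≤ ∫ x in (0:ℝ)..1, (u x) ^ 2 :=
    intervalIntegral.integral_nonneg h01 (fun x _ => sq_nonneg _)
  have hvnn : 0 ≤ ∫ x in (0:ℝ)..1, (v x) ^ 2 :=
    intervalIntegral.integral_nonneg h01 (fun x _ => sq_nonneg _)
  have hfnn : 0 ≤ ∫ x in (0:ℝ)..1, (f x) ^ 2 :=
    intervalIntegral.integral_nonneg h01 (fun x _ => sq_nonneg _)
  have hgnn : 0 ≤ ∫ x in (0:ℝ)..1, (g x) ^ 2 :=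
    intervalIntegral.integral_nonneg h01 (fun x _ => sq_nonneg _)
  -- rewrite goal integrals of squares as products
  have hsqu : (∫ x in (0:ℝ)..1, (u' x) ^ 2) = ∫ x in (0:ℝ)..1, u' x * u' x := by
    apply intervalIntegral.integral_congr; intro x _; exact pow_two (u' x)
  have hsqv : (∫ x in (0:ℝ)..1, (v' x) ^ 2) = ∫ x in (0:ℝ)..1, v' x * v' x := by
    apply intervalIntegral.integral_congr; intro x _; exact pow_two (v' x)
  rw [hsqu, hsqv]
  have hε2 : 0 < ε ^ 2 := pow_pos hε 2
  have hμ2 : 0 < μ ^ 2 := pow_pos (lt_of_lt_of_le hε hεμ) 2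
  have hα2 : 0 < α ^ 2 := pow_pos hα 2
  have h2C : (α ^ 2)⁻¹ * ((∫ x in (0:ℝ)..1, (f x) ^ 2) + (∫ x in (0:ℝ)..1, (g x) ^ 2))
      = 2 * ((2 * α ^ 2)⁻¹ * ((∫ x in (0:ℝ)..1, (f x) ^ 2) + (∫ x in (0:ℝ)..1, (g x) ^ 2))) := by
    have hinv : (α ^ 2)⁻¹ = 2 * (2 * α ^ 2)⁻¹ := by
      field_simp
    rw [hinv]; ring
  rw [h2C]
  have hX : 0 ≤ ε ^ 2 * ∫ x in (0:ℝ)..1, u' x * u' x := mul_nonneg hε2.le hu'nn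
  have hY : 0 ≤ μ ^ 2 * ∫ x in (0:ℝ)..1, v' x * v' x := mul_nonneg hμ2.le hv'nn
  linarith
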